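/- Let D be a nonempty subset of ℝ^N, let K ≥ 1, and for each k ∈ Fin K let f_k : ℝ^N → ℝ and g_k : ℝ^N → ℝ be functions with g_k(x) > 0 for all x ∈ D. Fix x* ∈ D and set λ* = min_{k ∈ Fin K} f_k(x*)/g_k(x*). Then x* is a maximizer over D of the generalized fractional objective x ↦ min_k f_k(x)/g_k(x) if and only if x* is a maximizer over D of the parametric objective x ↦ min_k (f_k(x) − λ*·g_k(x)); moreover, in that case the maximum value of the parametric objective over D equals 0, i.e., min_k (f_k(x*) − λ*·g_k(x*)) = 0. -/

import Mathlib

/-- Minimum of a real-valued function over the nonempty finite index set `Fin K`. -/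
noncomputable def finMin {K : ℕ} (hK : 1 ≤ K) (h : Fin K → ℝ) : ℝ :=
  Finset.univ.inf' (Finset.univ_nonempty_iff.mpr (Fin.pos_iff_nonempty.mp hK)) h

lemma finMin_le {K : ℕ} (hK : 1 ≤ K) (h : Fin K → ℝ) (k : Fin K) :
    finMin hK h ≤ h k :=
  Finset.inf'_le _ (Finset.mem_univ k)

lemma le_finMin {K : ℕ} (hK : 1 ≤ K) (h : Fin K → ℝ) (c : ℝ)
    (hc : ∀ k, c ≤ h k) : c ≤ finMin hK h :=
  Finset.le_inf' _ _ (fun k _ => hc k)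

lemma exists_finMin {K : ℕ} (hK : 1 ≤ K) (h : Fin K → ℝ) :
    ∃ k, finMin hK h = h k := by
  obtain ⟨k, _, hk⟩ := Finset.exists_mem_eq_inf'
    (Finset.univ_nonempty_iff.mpr (Fin.pos_iff_nonempty.mp hK)) h
  exact ⟨k, hk⟩

/-- Jagannathan–Dinkelbach equivalence for generalized fractional programs
(Proposition 1 of the paper). -/
theorem jagannathan_dinkelbach {N K : ℕ} (hK : 1 ≤ K)
    (D : Set (Fin N → ℝ)) (hD : D.Nonempty)
    (f g : Fin K → (Fin N → ℝ) → ℝ)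
    (hg : ∀ k, ∀ x ∈ D, 0 < g k x)
    (xstar : Fin N → ℝ) (hxstar : xstar ∈ D)
    (lam : ℝ) (hlam : lam = finMin hK (fun k => f k xstar / g k xstar)) :
    ((∀ x ∈ D, finMin hK (fun k => f k x / g k x) ≤
        finMin hK (fun k => f k xstar / g k xstar)) ↔
      (∀ x ∈ D, finMin hK (fun k => f k x - lam * g k x) ≤
        finMin hK (fun k => f k xstar - lam * g k xstar))) ∧
    ((∀ x ∈ D, finMin hK (fun k => f k x / g k x) ≤
        finMin hK (fun k => f k xstar / g k xstar)) →
      finMin hK (fun k => f k xstar - lam * g k xstar) = 0) := by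
  -- The parametric objective at xstar equals 0
  have hzero : finMin hK (fun k => f k xstar - lam * g k xstar) = 0 := by
    apply le_antisymm
    · obtain ⟨k0, hk0⟩ := exists_finMin hK (fun k => f k xstar / g k xstar)
      have hg0 := hg k0 xstar hxstar
      have : f k0 xstar - lam * g k0 xstar = 0 := by
        rw [hlam, hk0]
        field_simp
        ring
      calc finMin hK (fun k => f k xstar - lam * g k xstar)
          ≤ f k0 xstar - lam * g k0 xstar := finMin_le hK _ k0
        _ = 0 := this
    · apply le_finMin
      intro k
      have h1 : lam ≤ f k xstar / g k xstar := by
        rw [hlam]; exact finMin_le hK _ k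
      have hgk := hg k xstar hxstar
      have := (le_div_iff₀ hgk).mp h1
      linarith
  constructor
  · rw [hzero, ← hlam]
    constructor
    · intro h x hx
      obtain ⟨k0, hk0⟩ := exists_finMin hK (fun k => f k x / g k x)
      have h1 : f k0 x / g k0 x ≤ lam := by
        calc f k0 x / g k0 x = finMin hK (fun k => f k x / g k x) := hk0.symm
          _ ≤ lam := hlam ▸ h x hx
      have hgk := hg k0 x hx
      have h2 : f k0 x - lam * g k0 x ≤ 0 := by
        have := (div_le_iff₀ hgk).mp h1
        linarith
      calc finMin hK (fun k => f k x - lam * g k x)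
          ≤ f k0 x - lam * g k0 x := finMin_le hK _ k0
        _ ≤ 0 := h2
    · intro h x hx
      obtain ⟨k0, hk0⟩ := exists_finMin hK (fun k => f k x - lam * g k x)
      have h1 : f k0 x - lam * g k0 x ≤ 0 := hk0 ▸ h x hx
      have hgk := hg k0 x hx
      have h2 : f k0 x / g k0 x ≤ lam := by
        rw [div_le_iff₀ hgk]; linarith
      calc finMin hK (fun k => f k x / g k x)
          ≤ f k0 x / g k0 x := finMin_le hK _ k0
        _ ≤ lam := h2
  · intro _; exact hzero
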